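/- arXiv:1410.0229 — 5 statements merged into one kernel-verified Lean document; each statement's English description precedes it below -/
import Mathlib

section
/- For any graph G on n vertices, the k-th signless Laplacian spectral moment T_k(G) = sum of q_i^k over all signless Laplacian eigenvalues q_i equals the number of closed semi-edge walks of length k in G. -/
open scoped Classical

variable {V : Type*}

/-- The signless Laplacian matrix `Q = D + A` of a graph. -/
noncomputable def sLap (G : SimpleGraph V) [Fintype V] : Matrix V V ℝ :=
  Matrix.diagonal (fun v => (G.degree v : ℝ)) + G.adjMatrix ℝ

theorem sLap_isHermitian (G : SimpleGraph V) [Fintype V] : (sLap G).IsHermitian := by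
  unfold sLap
  rw [Matrix.IsHermitian, Matrix.conjTranspose_eq_transpose_of_trivial, Matrix.transpose_add,
    Matrix.diagonal_transpose, SimpleGraph.transpose_adjMatrix]

/-- The Laplacian matrix `L = D - A` of a graph. -/
noncomputable def lap (G : SimpleGraph V) [Fintype V] : Matrix V V ℝ :=
  Matrix.diagonal (fun v => (G.degree v : ℝ)) - G.adjMatrix ℝ

theorem lap_isHermitian (G : SimpleGraph V) [Fintype V] : (lap G).IsHermitian := by
  unfold lap
  rw [Matrix.IsHermitian, Matrix.conjTranspose_eq_transpose_of_trivial, Matrix.transpose_sub,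
    Matrix.diagonal_transpose, SimpleGraph.transpose_adjMatrix]

/-- The signless Laplacian Estrada index: the sum of `exp qᵢ` over the eigenvalues of `Q`. -/
noncomputable def SLEE (G : SimpleGraph V) [Fintype V] : ℝ :=
  ∑ i, Real.exp ((sLap_isHermitian G).eigenvalues i)

/-- The Laplacian Estrada index: the sum of `exp μᵢ` over the eigenvalues of `L`. -/
noncomputable def LEE (G : SimpleGraph V) [Fintype V] : ℝ :=
  ∑ i, Real.exp ((lap_isHermitian G).eigenvalues i)

/-- Semi-edge walks of length `k` from `x` to `y`: a sequence of `k+1` vertices and `k`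
edges of `G` such that consecutive vertices are (not necessarily distinct) endpoints of
the intervening edge. -/
def semiEdgeWalks (G : SimpleGraph V) (k : ℕ) (x y : V) :
    Set ((Fin (k + 1) → V) × (Fin k → Sym2 V)) :=
  {w | w.1 0 = x ∧ w.1 (Fin.last k) = y ∧
    ∀ i : Fin k, w.2 i ∈ G.edgeSet ∧ w.1 i.castSucc ∈ w.2 i ∧ w.1 i.succ ∈ w.2 i}

/-- Closed semi-edge walks of length `k` in `G`. -/
def closedSemiEdgeWalks (G : SimpleGraph V) (k : ℕ) :
    Set ((Fin (k + 1) → V) × (Fin k → Sym2 V)) :=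
  {w | w.1 0 = w.1 (Fin.last k) ∧
    ∀ i : Fin k, w.2 i ∈ G.edgeSet ∧ w.1 i.castSucc ∈ w.2 i ∧ w.1 i.succ ∈ w.2 i}

/-- The number of connected components of a graph. -/
noncomputable def numComponents (G : SimpleGraph V) : ℕ := Nat.card G.ConnectedComponent

/-- A cut vertex: a vertex whose removal increases the number of connected components. -/
def IsCutVertex (G : SimpleGraph V) (v : V) : Prop :=
  numComponents G < numComponents (G.induce ({v}ᶜ : Set V))

/-- The number of cut vertices of a graph. -/
noncomputable def cutVertexCount (G : SimpleGraph V) [Fintype V] : ℕ :=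
  (Finset.univ.filter (fun v => IsCutVertex G v)).card

/-- The graph obtained from `G` by adding the edge `uv`. -/
def addEdge (G : SimpleGraph V) (u v : V) : SimpleGraph V :=
  G ⊔ SimpleGraph.fromEdgeSet {s(u, v)}

/-- A block of `G`: a maximal vertex set inducing a connected subgraph with no cut vertex. -/
def IsBlock (G : SimpleGraph V) (B : Set V) : Prop :=
  (G.induce B).Connected ∧ (∀ v : B, ¬ IsCutVertex (G.induce B) v) ∧
  ∀ C : Set V, B ⊆ C → (G.induce C).Connected → (∀ v : C, ¬ IsCutVertex (G.induce C) v) →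
    B = C

open Finset Matrix

lemma myTracePow {n : Type*} [Fintype n] [DecidableEq n]
    (A : Matrix n n ℝ) (hA : A.IsHermitian) (k : ℕ) :
    (A ^ k).trace = ∑ i, hA.eigenvalues i ^ k := by
  set U : Matrix n n ℝ := (hA.eigenvectorUnitary : Matrix n n ℝ) with hU
  have hUU : star U * U = 1 := Unitary.coe_star_mul_self _
  have hUU' : U * star U = 1 := Unitary.coe_mul_star_self _
  have hAU : A * U = U * diagonal hA.eigenvalues := by
    conv_lhs => rw [hA.spectral_theorem]
    rw [Unitary.conjStarAlgAut_apply, ← hU, mul_assoc, hUU, mul_one, RCLike.ofReal_real_eq_id]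
    rfl
  have hD : ∀ m : ℕ, A ^ m * U = U * diagonal (fun i => hA.eigenvalues i ^ m) := by
    intro m
    induction m with
    | zero => simp
    | succ m ih =>
      rw [pow_succ, mul_assoc, hAU, ← mul_assoc, ih, mul_assoc, diagonal_mul_diagonal]
      simp [pow_succ]
  have : A ^ k = U * diagonal (fun i => hA.eigenvalues i ^ k) * star U := by
    rw [← hD, mul_assoc, hUU', mul_one]
  rw [this, trace_mul_cycle, hUU, one_mul, trace_diagonal]


lemma mySLapApply (G : SimpleGraph V) [Fintype V] (u v : V) :
    sLap G u v = ((G.edgeFinset.filter (fun e => u ∈ e ∧ v ∈ e)).card : ℝ) := by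
  by_cases h : u = v
  · subst h
    have he : (G.edgeFinset.filter (fun e => u ∈ e ∧ u ∈ e)) = G.incidenceFinset u := by
      rw [SimpleGraph.incidenceFinset_eq_filter]
      congr 1
      ext e
      simp
    rw [he, SimpleGraph.card_incidenceFinset_eq_degree]
    simp [sLap]
  · by_cases ha : G.Adj u v
    · have he : G.edgeFinset.filter (fun e => u ∈ e ∧ v ∈ e) = {s(u,v)} := by
        ext e
        simp only [mem_filter, Finset.mem_singleton, SimpleGraph.mem_edgeFinset]
        constructor
        · rintro ⟨-, hm⟩
          exact (Sym2.mem_and_mem_iff h).mp hm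
        · rintro rfl
          exact ⟨ha, Sym2.mem_mk_left .., Sym2.mem_mk_right ..⟩
      rw [he]
      simp [sLap, Matrix.diagonal_apply_ne _ h, ha]
    · have he : G.edgeFinset.filter (fun e => u ∈ e ∧ v ∈ e) = ∅ := by
        rw [Finset.filter_eq_empty_iff]
        rintro e hm ⟨hu, hv⟩
        have := (Sym2.mem_and_mem_iff h).mp ⟨hu, hv⟩
        subst this
        exact ha ((SimpleGraph.mem_edgeSet G).mp (SimpleGraph.mem_edgeFinset.mp hm))
      rw [he]
      simp [sLap, Matrix.diagonal_apply_ne _ h, ha]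

lemma myCardWalkSucc (G : SimpleGraph V) [Fintype V] (k : ℕ) (x y : V) :
    (Finset.univ.filter (fun w : (Fin (k + 2) → V) × (Fin (k + 1) → Sym2 V) =>
      w ∈ semiEdgeWalks G (k + 1) x y)).card =
    ∑ z, (Finset.univ.filter (fun w : (Fin (k + 1) → V) × (Fin k → Sym2 V) =>
      w ∈ semiEdgeWalks G k x z)).card *
      (G.edgeFinset.filter (fun e => z ∈ e ∧ y ∈ e)).card := by
  rw [Finset.card_eq_sum_card_fiberwise
    (f := fun w => w.1 (Fin.castSucc (Fin.last k))) (t := Finset.univ)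
    (fun _ _ => Finset.mem_univ _)]
  refine Finset.sum_congr rfl fun z _ => ?_
  rw [← Finset.card_product]
  refine Finset.card_nbij'
    (fun w => ((Fin.init w.1, Fin.init w.2), w.2 (Fin.last k)))
    (fun p => (Fin.snoc p.1.1 y, Fin.snoc p.1.2 p.2)) ?_ ?_ ?_ ?_
  · rintro w hw
    simp only [Finset.mem_coe, Finset.mem_filter, Finset.mem_univ, true_and, semiEdgeWalks,
      Set.mem_setOf_eq] at hw
    obtain ⟨⟨h0, hl, hs⟩, hz⟩ := hw
    simp only [Finset.mem_coe, Finset.mem_product, Finset.mem_filter, Finset.mem_univ, true_and,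
      semiEdgeWalks, Set.mem_setOf_eq, SimpleGraph.mem_edgeFinset]
    refine ⟨⟨?_, ?_, ?_⟩, ?_, ?_, ?_⟩
    · show w.1 (Fin.castSucc 0) = x
      rwa [Fin.castSucc_zero]
    · exact hz
    · intro i
      refine ⟨(hs i.castSucc).1, (hs i.castSucc).2.1, ?_⟩
      show w.1 (Fin.castSucc i.succ) ∈ w.2 i.castSucc
      rw [← Fin.succ_castSucc]
      exact (hs i.castSucc).2.2
    · exact (hs (Fin.last k)).1
    · rw [← hz]; exact (hs (Fin.last k)).2.1
    · have := (hs (Fin.last k)).2.2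
      rwa [Fin.succ_last, hl] at this
  · rintro ⟨⟨v, e⟩, f⟩ hp
    simp only [Finset.mem_coe, Finset.mem_product, Finset.mem_filter, Finset.mem_univ, true_and,
      semiEdgeWalks, Set.mem_setOf_eq, SimpleGraph.mem_edgeFinset] at hp
    obtain ⟨⟨h0, hl, hs⟩, hf, hzf, hyf⟩ := hp
    simp only [Finset.mem_coe, Finset.mem_filter, Finset.mem_univ, true_and, semiEdgeWalks,
      Set.mem_setOf_eq]
    refine ⟨⟨?_, ?_, ?_⟩, ?_⟩
    · show (Fin.snoc v y : Fin (k + 2) → V) 0 = x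
      rw [show (0 : Fin (k + 2)) = Fin.castSucc 0 by simp, Fin.snoc_castSucc]
      exact h0
    · exact Fin.snoc_last _ _
    · intro i
      refine Fin.lastCases ?_ (fun j => ?_) i
      · refine ⟨by simpa using hf, ?_, ?_⟩
        · show (Fin.snoc v y : Fin (k + 2) → V) (Fin.castSucc (Fin.last k)) ∈ _
          rw [Fin.snoc_castSucc, Fin.snoc_last, hl]
          exact hzf
        · show (Fin.snoc v y : Fin (k + 2) → V) (Fin.last k).succ ∈ (Fin.snoc e f : Fin (k + 1) → Sym2 V) (Fin.last k)
          rw [Fin.succ_last, Fin.snoc_last, Fin.snoc_last]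
          exact hyf
      · rw [Fin.snoc_castSucc]
        refine ⟨(hs j).1, ?_, ?_⟩
        · show (Fin.snoc v y : Fin (k + 2) → V) (Fin.castSucc (Fin.castSucc j)) ∈ _
          rw [Fin.snoc_castSucc]
          exact (hs j).2.1
        · show (Fin.snoc v y : Fin (k + 2) → V) (Fin.castSucc j).succ ∈ _
          rw [Fin.succ_castSucc, Fin.snoc_castSucc]
          exact (hs j).2.2
    · show (Fin.snoc v y : Fin (k + 2) → V) (Fin.castSucc (Fin.last k)) = z
      rw [Fin.snoc_castSucc]
      exact hl
  · rintro w hw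
    simp only [Finset.mem_coe, Finset.mem_filter, Finset.mem_univ, true_and, semiEdgeWalks,
      Set.mem_setOf_eq] at hw
    obtain ⟨⟨h0, hl, hs⟩, hz⟩ := hw
    have : y = w.1 (Fin.last (k + 1)) := hl.symm
    rw [this]
    exact Prod.ext (Fin.snoc_init_self _) (Fin.snoc_init_self _)
  · rintro ⟨⟨v, e⟩, f⟩ hp
    simp [Fin.init_snoc, Fin.snoc_last]

lemma myPowApply (G : SimpleGraph V) [Fintype V] (k : ℕ) (x y : V) :
    (sLap G ^ k) x y =
      ((Finset.univ.filter (fun w : (Fin (k + 1) → V) × (Fin k → Sym2 V) =>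
        w ∈ semiEdgeWalks G k x y)).card : ℝ) := by
  induction k generalizing x y with
  | zero =>
    rw [pow_zero]
    by_cases h : x = y
    · subst h
      rw [Matrix.one_apply_eq]
      have he : (Finset.univ.filter (fun w : (Fin 1 → V) × (Fin 0 → Sym2 V) =>
          w ∈ semiEdgeWalks G 0 x x)) = {(fun _ => x, fun i => i.elim0)} := by
        ext w
        simp only [Finset.mem_filter, Finset.mem_univ, true_and, Finset.mem_singleton,
          semiEdgeWalks, Set.mem_setOf_eq]
        constructor
        · rintro ⟨h0, -, -⟩
          refine Prod.ext (funext fun i => ?_) (funext fun i => i.elim0)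
          rw [Subsingleton.elim i 0]
          exact h0
        · rintro rfl
          exact ⟨rfl, rfl, fun i => i.elim0⟩
      rw [he, Finset.card_singleton, Nat.cast_one]
    · rw [Matrix.one_apply_ne h]
      have he : (Finset.univ.filter (fun w : (Fin 1 → V) × (Fin 0 → Sym2 V) =>
          w ∈ semiEdgeWalks G 0 x y)) = ∅ := by
        rw [Finset.filter_eq_empty_iff]
        rintro w - ⟨h0, hl, -⟩
        exact h (h0 ▸ hl ▸ rfl)
      rw [he, Finset.card_empty, Nat.cast_zero]
  | succ k ih =>
    rw [pow_succ, Matrix.mul_apply, myCardWalkSucc, Nat.cast_sum]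
    refine Finset.sum_congr rfl fun z _ => ?_
    rw [ih, mySLapApply, Nat.cast_mul]


/-- the k-th signless Laplacian spectral moment equals the number of closed
semi-edge walks of length k. -/
theorem spectral_moment_eq_card_closedSemiEdgeWalks (G : SimpleGraph V) [Fintype V] (k : ℕ) :
    (∑ i, ((sLap_isHermitian G).eigenvalues i) ^ k) =
      (Nat.card (closedSemiEdgeWalks G k) : ℝ) := by
  rw [← myTracePow (sLap G) (sLap_isHermitian G) k]
  have hcard : Nat.card (closedSemiEdgeWalks G k) =
      (Finset.univ.filter (fun w : (Fin (k + 1) → V) × (Fin k → Sym2 V) =>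
        w ∈ closedSemiEdgeWalks G k)).card := by
    rw [Nat.card_eq_fintype_card]
    exact Fintype.card_subtype _
  rw [hcard, Finset.card_eq_sum_card_fiberwise
    (f := fun w => w.1 0) (t := Finset.univ) (fun _ _ => Finset.mem_univ _)]
  rw [Matrix.trace, Nat.cast_sum]
  refine Finset.sum_congr rfl fun x _ => ?_
  rw [Matrix.diag_apply, myPowApply]
  congr 2
  rw [Finset.filter_filter]
  refine Finset.filter_congr fun w _ => ?_
  simp only [closedSemiEdgeWalks, semiEdgeWalks, Set.mem_setOf_eq]
  constructor
  · rintro ⟨h0, hl, hs⟩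
    exact ⟨⟨h0.trans hl.symm, hs⟩, h0⟩
  · rintro ⟨⟨hc, hs⟩, h0⟩
    exact ⟨h0, hc.symm.trans h0, hs⟩
end

section
/- The number of closed semi-edge walks of length k in a finite simple graph G equals the trace of Q^k, where Q = D + A is the signless Laplacian matrix of G. -/
open scoped Classical

variable {V : Type*}

private lemma sLap_apply_eq_sum (G : SimpleGraph V) [Fintype V] (z w : V) :
    sLap G z w = ∑ e : Sym2 V, if e ∈ G.edgeSet ∧ z ∈ e ∧ w ∈ e then (1:ℝ) else 0 := by
  classical
  rw [Finset.sum_boole]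
  by_cases h : z = w
  · subst h
    have h1 : (Finset.univ.filter fun e : Sym2 V => e ∈ G.edgeSet ∧ z ∈ e ∧ z ∈ e)
        = G.incidenceFinset z := by
      ext e
      simp [SimpleGraph.mem_incidenceFinset, SimpleGraph.incidenceSet, and_assoc]
    rw [h1, SimpleGraph.card_incidenceFinset_eq_degree]
    simp [sLap]
  · have h1 : (Finset.univ.filter fun e : Sym2 V => e ∈ G.edgeSet ∧ z ∈ e ∧ w ∈ e)
        = if G.Adj z w then {s(z, w)} else ∅ := by
      split_ifs with ha
      · ext e
        simp only [Finset.mem_filter, Finset.mem_univ, true_and, Finset.mem_singleton]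
        constructor
        · rintro ⟨he, hz, hw⟩; exact (Sym2.mem_and_mem_iff h).mp ⟨hz, hw⟩
        · rintro rfl
          exact ⟨ha, Sym2.mem_mk_left _ _, Sym2.mem_mk_right _ _⟩
      · ext e
        simp only [Finset.mem_filter, Finset.notMem_empty, iff_false, not_and]
        intro _ he hz hw
        have := (Sym2.mem_and_mem_iff h).mp ⟨hz, hw⟩
        rw [this] at he
        exact ha he
    rw [h1]
    simp [sLap, Matrix.diagonal_apply_ne _ h]
    split_ifs <;> simp

private lemma pow_apply_sum (M : Matrix V V ℝ) [Fintype V] :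
    ∀ (k : ℕ) (x y : V), (M ^ k) x y =
      ∑ f : Fin (k + 1) → V,
        if f 0 = x ∧ f (Fin.last k) = y then ∏ i : Fin k, M (f i.castSucc) (f i.succ) else 0
  | 0, x, y => by
    rw [← ((Equiv.funUnique (Fin 1) V).symm.sum_comp _)]
    simp only [Equiv.funUnique_symm_apply, Function.const_apply, Finset.univ_eq_empty,
      Finset.prod_empty, pow_zero]
    by_cases h : x = y
    · subst h
      simp [Matrix.one_apply]
    · rw [Matrix.one_apply_ne h]
      rw [Finset.sum_eq_zero]
      intro v _
      rw [if_neg]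
      rintro ⟨rfl, rfl⟩
      exact h rfl
  | (k+1), x, y => by
    rw [pow_succ', Matrix.mul_apply]
    rw [show (∑ f : Fin (k + 2) → V,
        if f 0 = x ∧ f (Fin.last (k+1)) = y then ∏ i : Fin (k+1), M (f i.castSucc) (f i.succ) else 0)
      = ∑ p : V × (Fin (k+1) → V),
        if (Fin.cons p.1 p.2 : Fin (k+2) → V) 0 = x ∧ (Fin.cons p.1 p.2 : Fin (k+2) → V) (Fin.last (k+1)) = y
        then ∏ i : Fin (k+1), M ((Fin.cons p.1 p.2 : Fin (k+2) → V) i.castSucc) ((Fin.cons p.1 p.2 : Fin (k+2) → V) i.succ) else 0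
      from ((Fin.consEquiv (fun _ : Fin (k + 2) => V)).sum_comp _).symm]
    rw [Fintype.sum_prod_type]
    have key : ∀ (z : V) (f' : Fin (k+1) → V),
        (if (Fin.cons z f' : Fin (k+2) → V) 0 = x ∧ (Fin.cons z f' : Fin (k+2) → V) (Fin.last (k+1)) = y
        then ∏ i : Fin (k+1), M ((Fin.cons z f' : Fin (k+2) → V) i.castSucc) ((Fin.cons z f' : Fin (k+2) → V) i.succ) else 0)
        = if z = x ∧ f' (Fin.last k) = y then M z (f' 0) * ∏ i : Fin k, M (f' i.castSucc) (f' i.succ) else 0 := by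
      intro z f'
      rw [← Fin.succ_last]
      simp only [Fin.cons_zero, Fin.cons_succ, Fin.prod_univ_succ, Fin.castSucc_zero,
        ← Fin.succ_castSucc]
    simp_rw [key]
    have hR : (∑ z : V, ∑ f' : Fin (k+1) → V,
        if z = x ∧ f' (Fin.last k) = y then M z (f' 0) * ∏ i : Fin k, M (f' i.castSucc) (f' i.succ) else 0)
        = ∑ f' : Fin (k+1) → V,
        if f' (Fin.last k) = y then M x (f' 0) * ∏ i : Fin k, M (f' i.castSucc) (f' i.succ) else 0 := by
      rw [Finset.sum_comm]
      refine Finset.sum_congr rfl fun f' _ => ?_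
      simp_rw [ite_and]
      rw [Finset.sum_ite_eq' Finset.univ x]
      simp
    rw [hR]
    simp_rw [pow_apply_sum M k, Finset.mul_sum, mul_ite, mul_zero]
    rw [Finset.sum_comm]
    refine Finset.sum_congr rfl fun f' _ => ?_
    simp_rw [ite_and]
    rw [Finset.sum_ite_eq Finset.univ (f' 0)]
    simp

/-- the number of closed semi-edge walks of length k equals trace(Q^k). -/
theorem card_closedSemiEdgeWalks_eq_trace_pow (G : SimpleGraph V) [Fintype V] (k : ℕ) :
    (Nat.card (closedSemiEdgeWalks G k) : ℝ) = Matrix.trace (sLap G ^ k) := by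
  classical
  have h1 : (Nat.card (closedSemiEdgeWalks G k) : ℝ)
      = ∑ w : (Fin (k+1) → V) × (Fin k → Sym2 V),
          if w ∈ closedSemiEdgeWalks G k then (1:ℝ) else 0 := by
    rw [Finset.sum_boole, Nat.card_eq_fintype_card, ← Set.toFinset_card]
    norm_cast
    congr 1
    ext w
    simp
  rw [h1, Fintype.sum_prod_type]
  have h2 : ∀ (f : Fin (k+1) → V) (g : Fin k → Sym2 V),
      (if (f, g) ∈ closedSemiEdgeWalks G k then (1:ℝ) else 0)
      = if f 0 = f (Fin.last k) then
          ∏ i : Fin k, (if g i ∈ G.edgeSet ∧ f i.castSucc ∈ g i ∧ f i.succ ∈ g i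
            then (1:ℝ) else 0) else 0 := by
    intro f g
    rw [show ((f, g) ∈ closedSemiEdgeWalks G k) ↔
        (f 0 = f (Fin.last k) ∧ ∀ i : Fin k,
          g i ∈ G.edgeSet ∧ f i.castSucc ∈ g i ∧ f i.succ ∈ g i) from Iff.rfl]
    by_cases hf : f 0 = f (Fin.last k)
    · simp [hf, Finset.prod_boole]
    · simp [hf]
  simp_rw [h2]
  have h3 : ∀ f : Fin (k+1) → V,
      (∑ g : Fin k → Sym2 V, if f 0 = f (Fin.last k) then
          ∏ i : Fin k, (if g i ∈ G.edgeSet ∧ f i.castSucc ∈ g i ∧ f i.succ ∈ g i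
            then (1:ℝ) else 0) else 0)
      = if f 0 = f (Fin.last k) then ∏ i : Fin k, sLap G (f i.castSucc) (f i.succ) else 0 := by
    intro f
    by_cases hf : f 0 = f (Fin.last k)
    · simp only [if_pos hf]
      rw [Finset.prod_congr rfl fun (i : Fin k) _ => sLap_apply_eq_sum G (f i.castSucc) (f i.succ),
        Finset.prod_univ_sum, Fintype.piFinset_univ]
    · simp [if_neg hf]
  simp_rw [h3]
  rw [Matrix.trace]
  simp_rw [Matrix.diag_apply, pow_apply_sum (sLap G) k]
  rw [Finset.sum_comm]
  refine Finset.sum_congr rfl fun f _ => ?_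
  simp_rw [ite_and]
  rw [Finset.sum_ite_eq Finset.univ (f 0)]
  simp [eq_comm]
end

section
/- If e is an edge not belonging to a finite simple graph G, then SLEE(G) < SLEE(G + e), i.e., adding an edge strictly increases the signless Laplacian Estrada index. -/
open scoped Classical

variable {V : Type*}

section Aux
open Matrix NormedSpace
variable [Fintype V]

noncomputable local instance : NormedRing (Matrix V V ℝ) := Matrix.linftyOpNormedRing
noncomputable local instance : NormedAlgebra ℝ (Matrix V V ℝ) := Matrix.linftyOpNormedAlgebra

noncomputable def traceCLM : Matrix V V ℝ →L[ℝ] ℝ :=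
  { Matrix.traceLinearMap V ℝ ℝ with
    cont := (Matrix.traceLinearMap V ℝ ℝ).continuous_of_finiteDimensional }

@[simp] lemma traceCLM_apply (M : Matrix V V ℝ) : traceCLM M = M.trace := rfl

lemma trace_exp_eq_tsum (A : Matrix V V ℝ) :
    (exp A).trace = ∑' (k : ℕ), ((k.factorial : ℝ)⁻¹ * (A ^ k).trace) := by
  have hs : Summable fun k : ℕ => ((k.factorial : ℝ)⁻¹) • A ^ k := expSeries_summable' (𝕂 := ℝ) A
  have := (traceCLM (V := V)).map_tsum hs
  rw [exp_eq_tsum ℝ]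
  simpa [Matrix.trace_smul, smul_eq_mul] using this

lemma summable_trace_exp (A : Matrix V V ℝ) :
    Summable fun k : ℕ => ((k.factorial : ℝ)⁻¹ * (A ^ k).trace) := by
  have hs : Summable fun k : ℕ => ((k.factorial : ℝ)⁻¹) • A ^ k := expSeries_summable' (𝕂 := ℝ) A
  have := (traceCLM (V := V)).summable hs
  simpa [Matrix.trace_smul, smul_eq_mul] using this

lemma trace_exp_eq_sum_exp (A : Matrix V V ℝ) (hA : A.IsHermitian) :
    (exp A).trace = ∑ i, Real.exp (hA.eigenvalues i) := by
  set U : Matrix V V ℝ := (hA.eigenvectorUnitary : Matrix V V ℝ) with hUdef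
  have hmem := hA.eigenvectorUnitary.2
  have hmul : U * star U = 1 := (Matrix.mem_unitaryGroup_iff).mp hmem
  have hmul' : star U * U = 1 := (Matrix.mem_unitaryGroup_iff').mp hmem
  have hinv : U⁻¹ = star U := Matrix.inv_eq_right_inv hmul
  have hUnit : IsUnit U := ⟨⟨U, star U, hmul, hmul'⟩, rfl⟩
  have hspec : A = U * Matrix.diagonal (RCLike.ofReal ∘ hA.eigenvalues) * U⁻¹ := by
    rw [hinv]; exact hA.spectral_theorem
  conv_lhs => rw [hspec]
  rw [Matrix.exp_conj U _ hUnit, Matrix.trace_mul_cycle, hinv,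
    hmul', Matrix.one_mul, Matrix.exp_diagonal, Matrix.trace_diagonal]
  simp [Real.exp_eq_exp_ℝ]

lemma entry_pow_le {A B : Matrix V V ℝ} (hA0 : ∀ i j, 0 ≤ A i j)
    (hAB : ∀ i j, A i j ≤ B i j) (k : ℕ) :
    ∀ i j, 0 ≤ (A ^ k) i j ∧ (A ^ k) i j ≤ (B ^ k) i j := by
  induction k with
  | zero =>
    intro i j
    simp only [pow_zero, Matrix.one_apply]
    split <;> simp
  | succ k ih =>
    intro i j
    rw [pow_succ, pow_succ, Matrix.mul_apply, Matrix.mul_apply]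
    constructor
    · exact Finset.sum_nonneg fun l _ => mul_nonneg (ih i l).1 (hA0 l j)
    · exact Finset.sum_le_sum fun l _ => mul_le_mul (ih i l).2 (hAB l j) (hA0 l j)
        (le_trans (ih i l).1 (ih i l).2)

lemma trace_exp_lt {A B : Matrix V V ℝ} (hA0 : ∀ i j, 0 ≤ A i j)
    (hAB : ∀ i j, A i j ≤ B i j) (htr : A.trace < B.trace) :
    (exp A).trace < (exp B).trace := by
  rw [trace_exp_eq_tsum, trace_exp_eq_tsum]
  have h0 : ∀ k : ℕ, (0:ℝ) ≤ (k.factorial : ℝ)⁻¹ * (A ^ k).trace := fun k =>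
    mul_nonneg (by positivity) (Finset.sum_nonneg fun i _ => (entry_pow_le hA0 hAB k i i).1)
  have hle : ∀ k : ℕ, (k.factorial : ℝ)⁻¹ * (A ^ k).trace ≤ (k.factorial : ℝ)⁻¹ * (B ^ k).trace :=
    fun k => mul_le_mul_of_nonneg_left
      (Finset.sum_le_sum fun i _ => (entry_pow_le hA0 hAB k i i).2) (by positivity)
  have h1 : (1:ℕ).factorial = 1 := rfl
  exact Summable.tsum_lt_tsum_of_nonneg h0 hle (i := 1)
    (by simpa [h1] using htr) (summable_trace_exp B)

end Aux

/-- adding an edge strictly increases the signless Laplacian Estrada index. -/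
theorem SLEE_lt_SLEE_addEdge (G : SimpleGraph V) [Fintype V] (u v : V)
    (hne : u ≠ v) (h : ¬ G.Adj u v) :
    SLEE G < SLEE (addEdge G u v) := by
  have hGle : G ≤ addEdge G u v := le_sup_left
  have hAdjuv : (addEdge G u v).Adj u v := by
    simp [addEdge, SimpleGraph.fromEdgeSet_adj, hne]
  have hdegle : ∀ w, G.degree w ≤ (addEdge G u v).degree w := fun w =>
    Finset.card_le_card (fun x hx => by
      rw [SimpleGraph.mem_neighborFinset] at hx ⊢
      exact hGle hx)
  have hdeglt : G.degree u < (addEdge G u v).degree u := by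
    apply Finset.card_lt_card
    constructor
    · intro x hx
      rw [SimpleGraph.mem_neighborFinset] at hx ⊢
      exact hGle hx
    · intro hsub
      have hv := hsub ((SimpleGraph.mem_neighborFinset _ _ _).mpr hAdjuv)
      rw [SimpleGraph.mem_neighborFinset] at hv
      exact h hv
  have h0 : ∀ i j, (0:ℝ) ≤ sLap G i j := by
    intro i j
    unfold sLap
    simp only [Matrix.add_apply, Matrix.diagonal_apply, SimpleGraph.adjMatrix_apply]
    have : (0:ℝ) ≤ (if i = j then (G.degree i : ℝ) else 0) := by positivity
    have : (0:ℝ) ≤ (if G.Adj i j then (1:ℝ) else 0) := by positivity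
    positivity
  have hAB : ∀ i j, sLap G i j ≤ sLap (addEdge G u v) i j := by
    intro i j
    unfold sLap
    simp only [Matrix.add_apply, Matrix.diagonal_apply, SimpleGraph.adjMatrix_apply]
    apply add_le_add
    · split
      · exact_mod_cast hdegle i
      · exact le_rfl
    · by_cases hij : G.Adj i j
      · simp [hij, hGle hij]
      · simp only [hij, if_false]
        positivity
  have htr : (sLap G).trace < (sLap (addEdge G u v)).trace := by
    unfold sLap
    rw [Matrix.trace_add, Matrix.trace_add, Matrix.trace_diagonal, Matrix.trace_diagonal,
      SimpleGraph.trace_adjMatrix, SimpleGraph.trace_adjMatrix, add_zero, add_zero]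
    exact Finset.sum_lt_sum (fun w _ => Nat.cast_le.mpr (hdegle w))
      ⟨u, Finset.mem_univ u, Nat.cast_lt.mpr hdeglt⟩
  have key := trace_exp_lt h0 hAB htr
  rw [trace_exp_eq_sum_exp _ (sLap_isHermitian G),
    trace_exp_eq_sum_exp _ (sLap_isHermitian (addEdge G u v))] at key
  exact key
end

section
/- The complete graph K_n is the unique graph on n vertices with maximum signless Laplacian Estrada index among all graphs on n vertices. -/
open scoped Classical

variable {V : Type*}

section aux
open Matrix

lemma trace_pow_eq_sum_pow' {n : Type*} [Fintype n] [DecidableEq n] {A : Matrix n n ℝ}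
    (hA : A.IsHermitian) (k : ℕ) :
    (A ^ k).trace = ∑ i, hA.eigenvalues i ^ k := by
  set U : Matrix n n ℝ := (hA.eigenvectorUnitary : Matrix n n ℝ)
  set D : Matrix n n ℝ := diagonal (RCLike.ofReal ∘ hA.eigenvalues)
  have hUU : star U * U = 1 := Unitary.coe_star_mul_self _
  have hUU' : U * star U = 1 := Unitary.coe_mul_star_self _
  have hpow : A ^ k = U * D ^ k * star U := by
    induction k with
    | zero => simp [hUU']
    | succ m ih =>
      rw [pow_succ, ih, hA.spectral_theorem, Unitary.conjStarAlgAut_apply]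
      rw [pow_succ, mul_assoc (U * D ^ m), ← mul_assoc (star U), ← mul_assoc (star U), hUU,
        one_mul, ← mul_assoc, ← mul_assoc]
  rw [hpow, trace_mul_comm, ← mul_assoc, hUU, one_mul, diagonal_pow, trace_diagonal]
  simp [RCLike.ofReal]

lemma pow_entry_nonneg_mono {n : Type*} [Fintype n] [DecidableEq n] {A B : Matrix n n ℝ}
    (hA0 : ∀ i j, 0 ≤ A i j) (hAB : ∀ i j, A i j ≤ B i j) (k : ℕ) :
    (∀ i j, 0 ≤ (A ^ k) i j) ∧ (∀ i j, (A ^ k) i j ≤ (B ^ k) i j) := by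
  induction k with
  | zero =>
    constructor <;> intro i j <;> simp [Matrix.one_apply] <;> positivity
  | succ m ih =>
    obtain ⟨h0, hle⟩ := ih
    constructor <;> intro i j <;> rw [pow_succ, Matrix.mul_apply]
    · exact Finset.sum_nonneg fun l _ => mul_nonneg (h0 i l) (hA0 l j)
    · rw [pow_succ, Matrix.mul_apply]
      exact Finset.sum_le_sum fun l _ =>
        mul_le_mul (hle i l) (hAB l j) (hA0 l j) (le_trans (h0 i l) (hle i l))

lemma SLEE_eq_tsum (G : SimpleGraph V) [Fintype V] :
    SLEE G = ∑' k : ℕ, ((sLap G ^ k).trace) / (Nat.factorial k) := by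
  unfold SLEE
  have h1 : ∀ i : V, Real.exp ((sLap_isHermitian G).eigenvalues i)
      = ∑' k : ℕ, ((sLap_isHermitian G).eigenvalues i) ^ k / (Nat.factorial k) := by
    intro i
    rw [Real.exp_eq_exp_ℝ, NormedSpace.exp_eq_tsum_div]
  simp_rw [h1]
  rw [← Summable.tsum_finsetSum (fun i _ => Real.summable_pow_div_factorial _)]
  congr 1; funext k
  rw [trace_pow_eq_sum_pow' (sLap_isHermitian G) k, Finset.sum_div]

lemma sLap_entry_nonneg (G : SimpleGraph V) [Fintype V] (i j : V) : 0 ≤ sLap G i j := by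
  unfold sLap
  rw [Matrix.add_apply]
  apply add_nonneg
  · by_cases h : i = j <;> simp [Matrix.diagonal_apply, h]
  · rw [SimpleGraph.adjMatrix_apply]; split <;> norm_num

lemma sLap_entry_mono {G H : SimpleGraph V} [Fintype V] (hGH : ∀ a b, G.Adj a b → H.Adj a b)
    (i j : V) : sLap G i j ≤ sLap H i j := by
  unfold sLap
  rw [Matrix.add_apply, Matrix.add_apply]
  apply add_le_add
  · by_cases h : i = j
    · subst h
      simp only [Matrix.diagonal_apply_eq, Nat.cast_le]
      apply Finset.card_le_card
      intro a ha
      rw [SimpleGraph.mem_neighborFinset] at ha ⊢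
      exact hGH _ _ ha
    · simp [Matrix.diagonal_apply, h]
  · rw [SimpleGraph.adjMatrix_apply, SimpleGraph.adjMatrix_apply]
    by_cases h : G.Adj i j
    · simp [h, hGH _ _ h]
    · simp only [h, if_false]
      split <;> norm_num

lemma trace_sLap_eq (G : SimpleGraph V) [Fintype V] :
    (sLap G).trace = ∑ v, (G.degree v : ℝ) := by
  unfold sLap Matrix.trace
  congr 1; funext v
  simp [Matrix.diag]

/-- the complete graph uniquely maximizes SLEE among graphs on `n` vertices. -/
theorem SLEE_lt_top_of_ne_top [Fintype V] (H : SimpleGraph V) (h : H ≠ ⊤) :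
    SLEE H < SLEE (⊤ : SimpleGraph V) := by
  have hmono : ∀ a b, H.Adj a b → (⊤ : SimpleGraph V).Adj a b := by
    intro a b hab
    exact (SimpleGraph.top_adj _ _).mpr hab.ne
  -- find a missing edge
  have hne : ¬ ((⊤ : SimpleGraph V) ≤ H) := fun hle => h (le_antisymm le_top hle)
  have hne' : ¬ ((⊤ : SimpleGraph V).IsSubgraph H) := by
    exact hne
  unfold SimpleGraph.IsSubgraph at hne'
  push_neg at hne'
  replace hne := hne'
  obtain ⟨v, w, hvw, hnadj⟩ := hne
  -- strict degree inequality at v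
  have hdeg : ∀ u : V, (H.degree u : ℝ) ≤ ((⊤ : SimpleGraph V).degree u : ℝ) := by
    intro u
    simp only [Nat.cast_le]
    apply Finset.card_le_card
    intro a ha
    rw [SimpleGraph.mem_neighborFinset] at ha ⊢
    exact hmono _ _ ha
  have hdegv : (H.degree v : ℝ) < ((⊤ : SimpleGraph V).degree v : ℝ) := by
    simp only [Nat.cast_lt]
    apply Finset.card_lt_card
    constructor
    · intro a ha
      rw [SimpleGraph.mem_neighborFinset] at ha ⊢
      exact hmono _ _ ha
    · intro hsub
      have := hsub (SimpleGraph.mem_neighborFinset _ _ _ |>.mpr hvw)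
      rw [SimpleGraph.mem_neighborFinset] at this
      exact hnadj this
  have htr1 : (sLap H).trace < (sLap (⊤ : SimpleGraph V)).trace := by
    rw [trace_sLap_eq, trace_sLap_eq]
    refine Finset.sum_lt_sum (fun u _ => ?_) ⟨v, Finset.mem_univ v, ?_⟩
    · simp only [Nat.cast_le]
      apply Finset.card_le_card
      intro a ha
      rw [SimpleGraph.mem_neighborFinset] at ha ⊢
      exact hmono _ _ ha
    · simp only [Nat.cast_lt]
      apply Finset.card_lt_card
      constructor
      · intro a ha
        rw [SimpleGraph.mem_neighborFinset] at ha ⊢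
        exact hmono _ _ ha
      · intro hsub
        have hw : w ∈ H.neighborFinset v := by
          apply hsub
          rw [SimpleGraph.mem_neighborFinset]
          exact hvw
        rw [SimpleGraph.mem_neighborFinset] at hw
        exact hnadj hw
  have hkey := pow_entry_nonneg_mono (sLap_entry_nonneg H) (sLap_entry_mono hmono)
  have htrace_nonneg : ∀ k : ℕ, 0 ≤ (sLap H ^ k).trace := fun k =>
    Finset.sum_nonneg fun i _ => (hkey k).1 i i
  have htrace_le : ∀ k : ℕ, (sLap H ^ k).trace ≤ (sLap (⊤ : SimpleGraph V) ^ k).trace := fun k =>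
    Finset.sum_le_sum fun i _ => (hkey k).2 i i
  rw [SLEE_eq_tsum, SLEE_eq_tsum]
  apply Summable.tsum_lt_tsum_of_nonneg (i := 1)
  · intro k
    exact div_nonneg (htrace_nonneg k) (by positivity)
  · intro k
    exact div_le_div_of_nonneg_right (htrace_le k) (by positivity) |>.trans_eq rfl
  · simpa [Nat.factorial] using htr1
  · have : (fun k : ℕ => ((sLap (⊤ : SimpleGraph V) ^ k).trace) / (Nat.factorial k))
        = fun k : ℕ => ∑ i, ((sLap_isHermitian (⊤ : SimpleGraph V)).eigenvalues i) ^ k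
          / (Nat.factorial k) := by
      funext k
      rw [trace_pow_eq_sum_pow' (sLap_isHermitian _) k, Finset.sum_div]
    rw [this]
    exact summable_sum fun i _ => Real.summable_pow_div_factorial _
end aux
end

section
/- The trace of Q^k is monotone under adding an edge: if H = G + e for an edge e not in G, then for every k ≥ 1, trace(Q(G)^k) ≤ trace(Q(H)^k), with strict inequality for k = 2. -/
open scoped Classical

variable {V : Type*}

section Aux
variable [Fintype V]

lemma pow_entry_nonneg_and_mono {A B : Matrix V V ℝ}
    (hA : ∀ i j, 0 ≤ A i j) (hAB : ∀ i j, A i j ≤ B i j) :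
    ∀ k : ℕ, (∀ i j, 0 ≤ (A ^ k) i j) ∧ (∀ i j, (A ^ k) i j ≤ (B ^ k) i j) := by
  intro k
  induction k with
  | zero =>
    constructor <;> intro i j <;> simp [Matrix.one_apply]
    · positivity
  | succ n ih =>
    obtain ⟨h1, h2⟩ := ih
    constructor
    · intro i j
      rw [pow_succ, Matrix.mul_apply]
      exact Finset.sum_nonneg fun l _ => mul_nonneg (h1 i l) (hA l j)
    · intro i j
      rw [pow_succ, pow_succ, Matrix.mul_apply, Matrix.mul_apply]
      refine Finset.sum_le_sum fun l _ => ?_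
      exact mul_le_mul (h2 i l) (hAB l j) (hA l j) (le_trans (h1 i l) (h2 i l))

end Aux

lemma sLap_nonneg (G : SimpleGraph V) [Fintype V] : ∀ i j, 0 ≤ sLap G i j := by
  intro i j
  unfold sLap
  simp only [Matrix.add_apply, Matrix.diagonal_apply]
  by_cases h : i = j <;> simp [h] <;> positivity

lemma le_addEdge (G : SimpleGraph V) (u v : V) : G ≤ addEdge G u v := le_sup_left

lemma sLap_le_addEdge (G : SimpleGraph V) [Fintype V] (u v : V) :
    ∀ i j, sLap G i j ≤ sLap (addEdge G u v) i j := by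
  intro i j
  unfold sLap
  simp only [Matrix.add_apply, Matrix.diagonal_apply]
  have hdeg : ∀ w, G.degree w ≤ (addEdge G u v).degree w := by
    intro w
    apply Finset.card_le_card
    intro x hx
    simp only [SimpleGraph.mem_neighborFinset] at *
    exact le_addEdge G u v hx
  have hadj : (G.adjMatrix ℝ) i j ≤ ((addEdge G u v).adjMatrix ℝ) i j := by
    simp only [SimpleGraph.adjMatrix_apply]
    by_cases h : G.Adj i j
    · simp [h, le_addEdge G u v h]
    · simp [h]
      positivity
  by_cases h : i = j
  · subst h; simpa using add_le_add (by exact_mod_cast hdeg i : (G.degree i : ℝ) ≤ ((addEdge G u v).degree i : ℝ)) hadj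
  · simpa [h] using hadj

/-- trace(Q^k) is monotone under adding an edge, strictly for k = 2. -/
theorem trace_sLap_pow_mono_addEdge (G : SimpleGraph V) [Fintype V] (u v : V)
    (hne : u ≠ v) (h : ¬ G.Adj u v) :
    (∀ k : ℕ, 1 ≤ k → Matrix.trace (sLap G ^ k) ≤ Matrix.trace (sLap (addEdge G u v) ^ k)) ∧
    Matrix.trace (sLap G ^ 2) < Matrix.trace (sLap (addEdge G u v) ^ 2) := by

  have hA := sLap_nonneg G
  have hAB := sLap_le_addEdge G u v
  constructor
  · intro k _
    unfold Matrix.trace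
    refine Finset.sum_le_sum fun i _ => ?_
    exact (pow_entry_nonneg_and_mono hA hAB k).2 i i
  · have hvG : v ∉ G.neighborFinset u := by
      simp [SimpleGraph.mem_neighborFinset, h]
    have hvH : v ∈ (addEdge G u v).neighborFinset u := by
      rw [SimpleGraph.mem_neighborFinset]
      simp [SimpleGraph.mem_neighborFinset, addEdge, hne]
    have hsub : G.neighborFinset u ⊆ (addEdge G u v).neighborFinset u := by
      intro x hx
      simp only [SimpleGraph.mem_neighborFinset] at *
      exact le_addEdge G u v hx
    have hdeg : G.degree u < (addEdge G u v).degree u :=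
      Finset.card_lt_card ((Finset.ssubset_iff_of_subset hsub).mpr ⟨v, hvH, hvG⟩)
    have huu : sLap G u u < sLap (addEdge G u v) u u := by
      simp only [sLap, Matrix.add_apply, Matrix.diagonal_apply_eq,
        SimpleGraph.adjMatrix_apply, SimpleGraph.irrefl, if_false]
      push_cast
      simpa using hdeg
    have huu0 : (0:ℝ) ≤ sLap G u u := hA u u
    unfold Matrix.trace
    simp only [pow_two, Matrix.diag_apply, Matrix.mul_apply]
    refine Finset.sum_lt_sum (fun i _ => Finset.sum_le_sum fun j _ =>
        mul_le_mul (hAB i j) (hAB j i) (hA j i) (le_trans (hA i j) (hAB i j)))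
      ⟨u, Finset.mem_univ u, ?_⟩
    refine Finset.sum_lt_sum (fun j _ =>
        mul_le_mul (hAB u j) (hAB j u) (hA j u) (le_trans (hA u j) (hAB u j)))
      ⟨u, Finset.mem_univ u, ?_⟩
    exact mul_lt_mul'' huu huu huu0 huu0
end
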